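/- Let q be a prime with q > 5 and let l be a positive integer. Then 5 divides σ(q^(2l)) if and only if q ≡ 1 (mod 10) and 2l + 1 ≡ 0 (mod 5). -/
import Mathlib

lemma aux_pow_ne_one (x : ZMod 5) (hx : x = 2 ∨ x = 3 ∨ x = 4) (l : ℕ) :
    x ^ (2 * l + 1) ≠ 1 := by
  rw [pow_succ, pow_mul]
  rcases hx with rfl | rfl | rfl
  · have h : (2 : ZMod 5) ^ 2 = -1 := by decide
    rw [h]
    rcases Nat.even_or_odd l with he | ho
    · rw [he.neg_one_pow]; decide
    · rw [ho.neg_one_pow]; decide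
  · have h : (3 : ZMod 5) ^ 2 = -1 := by decide
    rw [h]
    rcases Nat.even_or_odd l with he | ho
    · rw [he.neg_one_pow]; decide
    · rw [ho.neg_one_pow]; decide
  · have h : (4 : ZMod 5) ^ 2 = 1 := by decide
    rw [h, one_pow]; decide


lemma zmod5_ne_one : ((2 : ZMod 5) ≠ 1) ∧ ((3 : ZMod 5) ≠ 1) ∧ ((4 : ZMod 5) ≠ 1) := by decide

lemma zmod5_sub_ne : ((2 : ZMod 5) - 1 ≠ 0) ∧ ((3 : ZMod 5) - 1 ≠ 0) ∧ ((4 : ZMod 5) - 1 ≠ 0) := by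
  decide

/-- Let `q > 5` be a prime and `l ≥ 1`. Then `5 ∣ σ(q^(2l))` iff `q ≡ 1 [MOD 10]` and
`2l + 1 ≡ 0 [MOD 5]`. -/
theorem five_dvd_sigma_iff (q l : ℕ) (hq : q.Prime) (hq5 : 5 < q) (hl : 0 < l) :
    5 ∣ (ArithmeticFunction.sigma 1) (q ^ (2 * l)) ↔
      q % 10 = 1 ∧ (2 * l + 1) % 5 = 0 := by
  haveI : Fact (Nat.Prime 5) := ⟨by norm_num⟩
  have hq2 : q % 2 = 1 := Nat.odd_iff.mp (hq.odd_of_ne_two (by omega))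
  have h5 : ¬ (5 ∣ q) := by
    intro h
    rcases (Nat.prime_dvd_prime_iff_eq (by norm_num) hq).mp h with rfl
    omega
  have hq5m : q % 5 ≠ 0 := fun h => h5 (Nat.dvd_of_mod_eq_zero h)
  have hsig : (ArithmeticFunction.sigma 1) (q ^ (2 * l))
      = ∑ i ∈ Finset.range (2 * l + 1), q ^ i := by
    rw [ArithmeticFunction.sigma_apply, Nat.sum_divisors_prime_pow hq]
    simp [pow_one]
  rw [hsig]
  have key : (5 : ℕ) ∣ ∑ i ∈ Finset.range (2 * l + 1), q ^ i ↔
      ((∑ i ∈ Finset.range (2 * l + 1), (q : ZMod 5) ^ i) = 0) := by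
    rw [← ZMod.natCast_eq_zero_iff]
    push_cast
    rfl
  rw [key]
  have hxq : ((q % 5 : ℕ) : ZMod 5) = (q : ZMod 5) := ZMod.natCast_mod q 5
  have hlt : q % 5 < 5 := Nat.mod_lt _ (by norm_num)
  interval_cases h : q % 5
  · omega
  · -- q ≡ 1 mod 5
    have hx1 : (q : ZMod 5) = 1 := by rw [← hxq]; norm_num
    simp only [hx1, one_pow, Finset.sum_const, Finset.card_range]
    rw [nsmul_eq_mul, mul_one, ZMod.natCast_eq_zero_iff]
    constructor
    · intro hd; exact ⟨by omega, by omega⟩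
    · intro ⟨_, hd⟩; omega
  · have hx : (q : ZMod 5) = 2 := by rw [← hxq]; norm_num
    have hne : (q : ZMod 5) ≠ 1 := hx ▸ zmod5_ne_one.1
    rw [geom_sum_eq hne]
    constructor
    · intro hd
      exfalso
      rw [div_eq_zero_iff] at hd
      rcases hd with hd | hd
      · exact aux_pow_ne_one _ (by left; exact hx) l (by rwa [sub_eq_zero] at hd)
      · rw [hx] at hd; exact zmod5_sub_ne.1 hd
    · intro ⟨h10, _⟩; omega
  · have hx : (q : ZMod 5) = 3 := by rw [← hxq]; norm_num
    have hne : (q : ZMod 5) ≠ 1 := hx ▸ zmod5_ne_one.2.1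
    rw [geom_sum_eq hne]
    constructor
    · intro hd
      exfalso
      rw [div_eq_zero_iff] at hd
      rcases hd with hd | hd
      · exact aux_pow_ne_one _ (by right; left; exact hx) l (by rwa [sub_eq_zero] at hd)
      · rw [hx] at hd; exact zmod5_sub_ne.2.1 hd
    · intro ⟨h10, _⟩; omega
  · have hx : (q : ZMod 5) = 4 := by rw [← hxq]; norm_num
    have hne : (q : ZMod 5) ≠ 1 := hx ▸ zmod5_ne_one.2.2
    rw [geom_sum_eq hne]
    constructor
    · intro hd
      exfalso
      rw [div_eq_zero_iff] at hd
      rcases hd with hd | hd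
      · exact aux_pow_ne_one _ (by right; right; exact hx) l (by rwa [sub_eq_zero] at hd)
      · rw [hx] at hd; exact zmod5_sub_ne.2.2 hd
    · intro ⟨h10, _⟩; omega
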